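/- arXiv:1511.01303 — 3 statements merged into one kernel-verified Lean document; each statement's English description precedes it below -/
import Mathlib

section
/- For u ∈ ℝ^m and v ∈ ℝ^m with P_H(u) ≠ 0, the following are equivalent: (i) for all Δ ∈ H, ⟨u, Δ⟩ ≥ 0 implies ⟨v, Δ⟩ ≥ 0; (ii) v = a·u + b·𝟏 for some a ≥ 0, b ∈ ℝ. (Here H = {Δ : ∑ Δⱼ = 0} and P_H is orthogonal projection onto H.) -/
theorem halfspace_inclusion_iff_nonneg_combination (m : ℕ) (hm : 2 ≤ m)
    (u v : Fin m → ℝ)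
    (hu : u - ((∑ i, u i) / (m : ℝ)) • (1 : Fin m → ℝ) ≠ 0) :
    (∀ Δ : Fin m → ℝ, (∑ j, Δ j) = 0 →
        0 ≤ ∑ j, u j * Δ j → 0 ≤ ∑ j, v j * Δ j) ↔
    (∃ a b : ℝ, 0 ≤ a ∧ v = a • u + b • (1 : Fin m → ℝ)) := by
  have hm0 : (m : ℝ) ≠ 0 := by positivity
  set s : ℝ := (∑ i, u i) / (m : ℝ) with hs
  set t : ℝ := (∑ i, v i) / (m : ℝ) with ht
  set ub : Fin m → ℝ := fun i => u i - s with hub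
  set vb : Fin m → ℝ := fun i => v i - t with hvb
  have hub_ne : ub ≠ 0 := by
    intro h
    apply hu
    funext i
    have := congrFun h i
    simp [hub] at this
    simp [this, hub]
  have hsum_ub : ∑ i, ub i = 0 := by
    simp [hub, Finset.sum_sub_distrib, hs]
    field_simp
    ring
  have hsum_vb : ∑ i, vb i = 0 := by
    simp [hvb, Finset.sum_sub_distrib, ht]
    field_simp
    ring
  have hN : 0 < ∑ i, ub i * ub i := by
    rcases Function.ne_iff.mp hub_ne with ⟨i0, hi0⟩
    have hi0' : ub i0 ≠ 0 := by simpa using hi0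
    exact Finset.sum_pos' (fun i _ => mul_self_nonneg _)
      ⟨i0, Finset.mem_univ _, mul_self_pos.mpr hi0'⟩
  constructor
  · intro h
    set N : ℝ := ∑ i, ub i * ub i with hNdef
    set a : ℝ := (∑ i, vb i * ub i) / N with ha
    set w : Fin m → ℝ := fun i => vb i - a * ub i with hw
    have hsum_w : ∑ i, w i = 0 := by
      simp [hw, Finset.sum_sub_distrib, hsum_vb, ← Finset.mul_sum, hsum_ub]
    have hubw : ∑ i, ub i * w i = 0 := by
      have e : ∑ i, ub i * w i = (∑ i, vb i * ub i) - a * N := by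
        rw [hNdef, Finset.mul_sum, ← Finset.sum_sub_distrib]
        refine Finset.sum_congr rfl fun i _ => by simp only [hw]; ring
      rw [e, ha]
      field_simp
      ring
    have huw : ∑ i, u i * w i = 0 := by
      have : ∑ i, u i * w i = ∑ i, ub i * w i + s * ∑ i, w i := by
        rw [Finset.mul_sum, ← Finset.sum_add_distrib]
        refine Finset.sum_congr rfl fun i _ => by simp [hub]; ring
      rw [this, hubw, hsum_w]; ring
    have hvw : ∑ i, v i * w i = ∑ i, w i * w i := by
      have h1 : ∑ i, v i * w i = ∑ i, vb i * w i + t * ∑ i, w i := by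
        rw [Finset.mul_sum, ← Finset.sum_add_distrib]
        refine Finset.sum_congr rfl fun i _ => by simp [hvb]; ring
      have h2 : ∑ i, vb i * w i = a * ∑ i, ub i * w i + ∑ i, w i * w i := by
        rw [Finset.mul_sum, ← Finset.sum_add_distrib]
        refine Finset.sum_congr rfl fun i _ => by simp [hw]; ring
      rw [h1, h2, hubw, hsum_w]; ring
    have hkey := h (fun i => -(w i)) (by simpa using hsum_w)
      (by simp [mul_neg, huw])
    have hw0 : ∀ i, w i = 0 := by
      have hle : ∑ i, w i * w i ≤ 0 := by
        have : (0:ℝ) ≤ -∑ i, v i * w i := by simpa [mul_neg] using hkey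
        nlinarith [hvw]
      intro i
      have := (Finset.sum_eq_zero_iff_of_nonneg (fun i _ => mul_self_nonneg (w i))).mp
        (le_antisymm hle (Finset.sum_nonneg fun i _ => mul_self_nonneg (w i))) i (Finset.mem_univ i)
      exact mul_self_eq_zero.mp this
    have ha_nonneg : 0 ≤ a := by
      have h1 := h ub hsum_ub (by
        have : ∑ j, u j * ub j = N + s * ∑ i, ub i := by
          rw [hNdef, Finset.mul_sum, ← Finset.sum_add_distrib]
          refine Finset.sum_congr rfl fun i _ => by simp [hub]; ring
        rw [this, hsum_ub]; nlinarith [hN])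
      have h2 : ∑ j, v j * ub j = a * N := by
        have e1 : ∑ j, v j * ub j = ∑ j, vb j * ub j + t * ∑ i, ub i := by
          rw [Finset.mul_sum, ← Finset.sum_add_distrib]
          refine Finset.sum_congr rfl fun i _ => by simp [hvb]; ring
        rw [e1, hsum_ub, ha]
        field_simp
        ring
      rw [h2] at h1
      nlinarith [hN, h1]
    refine ⟨a, t - a * s, ha_nonneg, ?_⟩
    funext i
    have := hw0 i
    simp [hw, hvb, hub] at this
    simp [Pi.add_apply, Pi.smul_apply]
    linarith
  · rintro ⟨a, b, ha, rfl⟩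
    intro Δ hΔ hΔu
    have : ∑ j, (a • u + b • (1 : Fin m → ℝ)) j * Δ j
        = a * (∑ j, u j * Δ j) + b * ∑ j, Δ j := by
      rw [Finset.mul_sum, Finset.mul_sum, ← Finset.sum_add_distrib]
      refine Finset.sum_congr rfl fun i _ => by simp; ring
    rw [this, hΔ]
    nlinarith
end

section
/- If an inner product φ on a finite-dimensional real vector space V makes the vectors w₁,…,w_m of a regular simplex (∑wⱼ = 0, any m−1 of them a basis) have equal pairwise φ-distances and equal φ-norms, and φ₀ is another inner product with the same property for the same vectors, and dim V = m − 1, then φ = λ·φ₀ for some λ > 0. -/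
theorem inner_products_on_regular_simplex_proportional
    (m : ℕ) (hm : 3 ≤ m)
    (V : Type*) [AddCommGroup V] [Module ℝ V] [FiniteDimensional ℝ V]
    (hdim : Module.finrank ℝ V = m - 1)
    (w : Fin m → V)
    (hsum : (∑ j, w j) = 0)
    (hbasis : ∀ j : Fin m, LinearIndependent ℝ
      (fun i : {i : Fin m // i ≠ j} => w i.1))
    (φ φ₀ : V →ₗ[ℝ] V →ₗ[ℝ] ℝ)
    (hφsymm : ∀ x y, φ x y = φ y x)
    (hφpos : ∀ x, x ≠ 0 → 0 < φ x x)
    (hφ₀symm : ∀ x y, φ₀ x y = φ₀ y x)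
    (hφ₀pos : ∀ x, x ≠ 0 → 0 < φ₀ x x)
    (hφnorm : ∃ c : ℝ, ∀ i, φ (w i) (w i) = c)
    (hφdist : ∃ d : ℝ, ∀ i j, i ≠ j → φ (w i - w j) (w i - w j) = d)
    (hφ₀norm : ∃ c : ℝ, ∀ i, φ₀ (w i) (w i) = c)
    (hφ₀dist : ∃ d : ℝ, ∀ i j, i ≠ j → φ₀ (w i - w j) (w i - w j) = d) :
    ∃ lam : ℝ, 0 < lam ∧ ∀ x y, φ x y = lam * φ₀ x y := by
  classical
  obtain ⟨c, hc⟩ := hφnorm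
  obtain ⟨d, hd⟩ := hφdist
  obtain ⟨c₀, hc₀⟩ := hφ₀norm
  obtain ⟨d₀, hd₀⟩ := hφ₀dist
  set i0 : Fin m := ⟨0, by omega⟩ with hi0
  set i1 : Fin m := ⟨1, by omega⟩ with hi1
  have hne01 : i0 ≠ i1 := by simp [hi0, hi1, Fin.ext_iff]
  have hw0 : w i0 ≠ 0 := (hbasis i1).ne_zero ⟨i0, hne01⟩
  have hcpos : 0 < c := by rw [← hc i0]; exact hφpos _ hw0
  have hw0' : w i0 ≠ 0 := hw0
  have hc₀pos : 0 < c₀ := by rw [← hc₀ i0]; exact hφ₀pos _ hw0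
  -- off-diagonal entries are constant
  have key : ∀ (ψ : V →ₗ[ℝ] V →ₗ[ℝ] ℝ), (∀ x y, ψ x y = ψ y x) →
      ∀ (cc dd : ℝ), (∀ i, ψ (w i) (w i) = cc) →
      (∀ i j, i ≠ j → ψ (w i - w j) (w i - w j) = dd) →
      ∀ i j, i ≠ j → ψ (w i) (w j) = cc - dd / 2 := by
    intro ψ hsym cc dd hcc hdd i j hij
    have e1 : ψ (w i - w j) (w i - w j)
        = ψ (w i) (w i) - ψ (w j) (w i) - (ψ (w i) (w j) - ψ (w j) (w j)) := by
      simp [map_sub, LinearMap.sub_apply]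
    linarith [hdd i j hij, hcc i, hcc j, hsym (w j) (w i), e1]
  have hoff := key φ hφsymm c d hc hd
  have hoff₀ := key φ₀ hφ₀symm c₀ d₀ hc₀ hd₀
  set M : ℝ := ((m - 1 : ℕ) : ℝ) with hM
  have hMne : M ≠ 0 := by
    rw [hM]
    exact_mod_cast (by omega : m - 1 ≠ 0)
  -- sum relation
  have sumrel : ∀ (ψ : V →ₗ[ℝ] V →ₗ[ℝ] ℝ) (cc ee : ℝ),
      (∀ i, ψ (w i) (w i) = cc) → (∀ i j, i ≠ j → ψ (w i) (w j) = ee) →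
      cc + M * ee = 0 := by
    intro ψ cc ee hcc hee
    have h0 : ∑ j, ψ (w i0) (w j) = 0 := by
      rw [← map_sum, hsum, map_zero]
    rw [← Finset.sum_erase_add _ _ (Finset.mem_univ i0)] at h0
    have h1 : ∑ j ∈ Finset.univ.erase i0, ψ (w i0) (w j) = M * ee := by
      rw [Finset.sum_congr rfl
        (fun j hj => hee i0 j (Ne.symm (Finset.ne_of_mem_erase hj)))]
      rw [Finset.sum_const, Finset.card_erase_of_mem (Finset.mem_univ i0)]
      simp [hM, Fintype.card_fin, nsmul_eq_mul]
    rw [h1, hcc i0] at h0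
    linarith
  have hE := sumrel φ c (c - d / 2) hc hoff
  have hE₀ := sumrel φ₀ c₀ (c₀ - d₀ / 2) hc₀ hoff₀
  set lam : ℝ := c / c₀ with hlamdef
  have hlam : 0 < lam := div_pos hcpos hc₀pos
  have hlc : lam * c₀ = c := div_mul_cancel₀ c hc₀pos.ne'
  have hle : lam * (c₀ - d₀ / 2) = c - d / 2 := by
    have h1 : M * (c - d / 2) = -c := by linarith
    have h2 : M * (c₀ - d₀ / 2) = -c₀ := by linarith
    have h3 : M * (lam * (c₀ - d₀ / 2)) = M * (c - d / 2) := by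
      calc M * (lam * (c₀ - d₀ / 2)) = lam * (M * (c₀ - d₀ / 2)) := by ring
        _ = lam * (-c₀) := by rw [h2]
        _ = -(lam * c₀) := by ring
        _ = -c := by rw [hlc]
        _ = M * (c - d / 2) := h1.symm
    exact mul_left_cancel₀ hMne h3
  have hcard : Fintype.card {i : Fin m // i ≠ i0} = Module.finrank ℝ V := by
    rw [hdim]
    simp [Fintype.card_subtype_compl]
  have : Nonempty {i : Fin m // i ≠ i0} := ⟨⟨i1, hne01.symm⟩⟩
  let b : Module.Basis {i : Fin m // i ≠ i0} ℝ V :=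
    basisOfLinearIndependentOfCardEqFinrank (hbasis i0) hcard
  have hb : ∀ i, b i = w i.1 := by
    intro i
    simp [b, coe_basisOfLinearIndependentOfCardEqFinrank]
  have heq : φ = lam • φ₀ := by
    apply LinearMap.ext_basis b b
    intro i j
    rw [hb, hb]
    simp only [LinearMap.smul_apply, smul_eq_mul]
    by_cases hij : (i : Fin m) = (j : Fin m)
    · rw [hij, hc j.1, hc₀ j.1, hlc]
    · rw [hoff i.1 j.1 hij, hoff₀ i.1 j.1 hij, hle]
  refine ⟨lam, hlam, fun x y => ?_⟩
  rw [heq]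
  simp
end

section
/- A bijection of the real projective space P(ℝⁿ) (n ≥ 3) sending projective lines to projective lines is induced by a linear automorphism of ℝⁿ. -/
open Module Submodule
namespace FTPG
variable {n : ℕ}
abbrev PT (n : ℕ) := {W : Submodule ℝ (Fin n → ℝ) // Module.finrank ℝ W = 1}
noncomputable def pt (v : Fin n → ℝ) (hv : v ≠ 0) : PT n :=
  ⟨ℝ ∙ v, finrank_span_singleton hv⟩
lemma pt_le {v : Fin n → ℝ} (hv : v ≠ 0) {P : Submodule ℝ (Fin n → ℝ)} (h : v ∈ P) :
    (pt v hv).1 ≤ P := (span_singleton_le_iff_mem v P).2 h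
lemma pt_eq_of_mem {v w : Fin n → ℝ} (hv : v ≠ 0) (hw : w ≠ 0) (h : v ∈ (ℝ ∙ w)) :
    pt v hv = pt w hw := by
  have h1 : (pt v hv).1 ≤ (pt w hw).1 := pt_le hv h
  exact Subtype.ext (Submodule.eq_of_le_of_finrank_le h1 (by
    rw [(pt w hw).2, (pt v hv).2]))
lemma exists_rep (W : PT n) : ∃ (v : Fin n → ℝ) (hv : v ≠ 0), W = pt v hv := by
  have h1 : Module.finrank ℝ W.1 = 1 := W.2
  have : Nontrivial W.1 := by
    refine Module.nontrivial_of_finrank_pos (R := ℝ) ?_; omega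
  obtain ⟨⟨v, hvW⟩, hv0⟩ := exists_ne (0 : W.1)
  have hv : v ≠ 0 := fun h => hv0 (Subtype.ext h)
  refine ⟨v, hv, ?_⟩
  have h2 : (pt v hv).1 ≤ W.1 := pt_le hv hvW
  exact (Subtype.ext (Submodule.eq_of_le_of_finrank_le h2 (by rw [W.2, (pt v hv).2]))).symm

def LinesToLines (Ψ : PT n ≃ PT n) : Prop :=
  ∀ P : Submodule ℝ (Fin n → ℝ), Module.finrank ℝ P = 2 →
      ∃ Q : Submodule ℝ (Fin n → ℝ), Module.finrank ℝ Q = 2 ∧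
        ∀ W : PT n, W.1 ≤ P → (Ψ W).1 ≤ Q

variable (Ψ : PT n ≃ PT n)

noncomputable def f (P : Submodule ℝ (Fin n → ℝ)) : Submodule ℝ (Fin n → ℝ) :=
  ⨆ v : {v : Fin n → ℝ // v ∈ P ∧ v ≠ 0}, (Ψ (pt v.1 v.2.2)).1

lemma le_f {v : Fin n → ℝ} (hv : v ≠ 0) {P} (h : v ∈ P) :
    (Ψ (pt v hv)).1 ≤ f Ψ P :=
  le_iSup (fun v : {v : Fin n → ℝ // v ∈ P ∧ v ≠ 0} => (Ψ (pt v.1 v.2.2)).1) ⟨v, h, hv⟩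

lemma f_mono : Monotone (f Ψ) := by
  intro P Q h
  exact iSup_le fun v => le_f Ψ v.2.2 (h v.2.1)

lemma f_bot : f Ψ (⊥ : Submodule ℝ (Fin n → ℝ)) = ⊥ :=
  le_bot_iff.1 (iSup_le fun v => absurd (mem_bot ℝ |>.1 v.2.1) v.2.2)

lemma f_span_singleton {v : Fin n → ℝ} (hv : v ≠ 0) : f Ψ (ℝ ∙ v) = (Ψ (pt v hv)).1 := by
  refine le_antisymm (iSup_le fun w => ?_) (le_f Ψ hv (mem_span_singleton_self v))
  rw [pt_eq_of_mem w.2.2 hv w.2.1]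

lemma sup_points {A B : Submodule ℝ (Fin n → ℝ)} (hA : finrank ℝ A = 1) (hB : finrank ℝ B = 1)
    (hne : A ≠ B) : finrank ℝ ((A ⊔ B) : Submodule ℝ (Fin n → ℝ)) = 2 := by
  have h1 : A ⊓ B < A := by
    refine lt_of_le_of_ne inf_le_left fun h => hne ?_
    have hAB : A ≤ B := h ▸ inf_le_right
    exact Submodule.eq_of_le_of_finrank_le hAB (by rw [hA, hB])
  have h2 : finrank ℝ ((A ⊓ B) : Submodule ℝ (Fin n → ℝ)) < 1 :=
    hA ▸ Submodule.finrank_lt_finrank_of_lt h1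
  have h3 := Submodule.finrank_sup_add_finrank_inf_eq A B
  omega

lemma line_image (hΨ : LinesToLines Ψ) {u v w : Fin n → ℝ} (hu : u ≠ 0) (hv : v ≠ 0) (hw : w ≠ 0)
    (h : w ∈ Submodule.span ℝ {u, v}) :
    (Ψ (pt w hw)).1 ≤ (Ψ (pt u hu)).1 ⊔ (Ψ (pt v hv)).1 := by
  by_cases heq : (ℝ ∙ u : Submodule ℝ (Fin n → ℝ)) = ℝ ∙ v
  · have hvu : v ∈ (ℝ ∙ u : Submodule ℝ (Fin n → ℝ)) := heq ▸ mem_span_singleton_self v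
    have hle : Submodule.span ℝ ({u, v} : Set (Fin n → ℝ)) ≤ ℝ ∙ u := by
      rw [Submodule.span_le, Set.insert_subset_iff, Set.singleton_subset_iff]
      exact ⟨mem_span_singleton_self u, hvu⟩
    have hwpt : pt w hw = pt u hu := pt_eq_of_mem hw hu (hle h)
    rw [hwpt]; exact le_sup_left
  · have hind : LinearIndependent ℝ ![u, v] := by
      rw [LinearIndependent.pair_iff]
      intro s t hst
      by_cases ht : t = 0
      · subst ht
        simp only [smul_zero, add_zero, zero_smul] at hst
        rcases smul_eq_zero.1 hst with h | h
        · exact ⟨h, rfl⟩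
        · exact absurd h hu
      · exfalso
        apply heq
        have hvmem : v ∈ (ℝ ∙ u : Submodule ℝ (Fin n → ℝ)) := by
          have h3 : t • v = (-s) • u := by
            rw [neg_smul, eq_neg_iff_add_eq_zero, add_comm]
            exact hst
          have h4 : v = (t⁻¹ * (-s)) • u := by
            calc v = t⁻¹ • (t • v) := by rw [smul_smul, inv_mul_cancel₀ ht, one_smul]
              _ = t⁻¹ • ((-s) • u) := by rw [h3]
              _ = (t⁻¹ * (-s)) • u := by rw [smul_smul]
          rw [h4]; exact smul_mem _ _ (mem_span_singleton_self u)
        have h1 : (ℝ ∙ v : Submodule ℝ (Fin n → ℝ)) ≤ ℝ ∙ u :=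
          (span_singleton_le_iff_mem v _).2 hvmem
        exact (Submodule.eq_of_le_of_finrank_le h1 (by
          rw [finrank_span_singleton hu, finrank_span_singleton hv])).symm
    have hrank : finrank ℝ (Submodule.span ℝ ({u, v} : Set (Fin n → ℝ))) = 2 := by
      have h2 := finrank_span_eq_card hind
      have hrange : Set.range ![u, v] = {u, v} := by
        ext x
        constructor
        · rintro ⟨i, rfl⟩
          fin_cases i <;> simp
        · rintro (rfl | rfl)
          exacts [⟨0, rfl⟩, ⟨1, rfl⟩]
      rw [hrange] at h2
      simpa using h2
    obtain ⟨Q, hQ2, hQ⟩ := hΨ _ hrank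
    have hu' : (Ψ (pt u hu)).1 ≤ Q := hQ _
      ((span_singleton_le_iff_mem _ _).2 (subset_span (by simp)))
    have hv' : (Ψ (pt v hv)).1 ≤ Q := hQ _
      ((span_singleton_le_iff_mem _ _).2 (subset_span (by simp)))
    have hw' : (Ψ (pt w hw)).1 ≤ Q := hQ _ ((span_singleton_le_iff_mem _ _).2 h)
    have hne : (Ψ (pt u hu)).1 ≠ (Ψ (pt v hv)).1 := by
      intro hcon
      have : pt u hu = pt v hv := Ψ.injective (Subtype.ext hcon)
      exact heq (congrArg Subtype.val this)
    have hsup : finrank ℝ (((Ψ (pt u hu)).1 ⊔ (Ψ (pt v hv)).1 : Submodule ℝ (Fin n → ℝ))) = 2 :=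
      sup_points (Ψ (pt u hu)).2 (Ψ (pt v hv)).2 hne
    have heqQ : (Ψ (pt u hu)).1 ⊔ (Ψ (pt v hv)).1 = Q :=
      Submodule.eq_of_le_of_finrank_le (sup_le hu' hv') (by rw [hsup, hQ2])
    rw [heqQ]; exact hw'

lemma f_sup_point (hΨ : LinesToLines Ψ) {v : Fin n → ℝ} (hv : v ≠ 0) (P : Submodule ℝ (Fin n → ℝ)) :
    f Ψ (P ⊔ ℝ ∙ v) ≤ f Ψ P ⊔ (Ψ (pt v hv)).1 := by
  refine iSup_le fun w => ?_
  obtain ⟨u, hu, z, hz, huz⟩ := mem_sup.1 w.2.1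
  obtain ⟨c, rfl⟩ := mem_span_singleton.1 hz
  by_cases hu0 : u = 0
  · have hwv : w.1 ∈ (ℝ ∙ v : Submodule ℝ (Fin n → ℝ)) := by
      rw [← huz, hu0, zero_add]; exact smul_mem _ _ (mem_span_singleton_self v)
    rw [pt_eq_of_mem w.2.2 hv hwv]
    exact le_sup_right
  · have hmem : w.1 ∈ Submodule.span ℝ ({u, v} : Set (Fin n → ℝ)) := by
      rw [← huz]
      exact add_mem (subset_span (by simp)) (smul_mem _ _ (subset_span (by simp)))
    exact (line_image Ψ hΨ hu0 hv w.2.2 hmem).trans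
      (sup_le_sup (le_f Ψ hu0 hu) le_rfl)

lemma f_sup_finset (hΨ : LinesToLines Ψ) (P : Submodule ℝ (Fin n → ℝ))
    (s : Finset (Fin n → ℝ)) :
    f Ψ (P ⊔ span ℝ (s : Set (Fin n → ℝ))) ≤ f Ψ P ⊔ f Ψ (span ℝ (s : Set (Fin n → ℝ))) := by
  induction s using Finset.induction_on generalizing P with
  | empty => simpa using le_sup_left
  | @insert a s ha IH =>
    have hins : span ℝ ((insert a s : Finset (Fin n → ℝ)) : Set (Fin n → ℝ))
        = (ℝ ∙ a) ⊔ span ℝ (s : Set (Fin n → ℝ)) := by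
      rw [Finset.coe_insert, Submodule.span_insert]
    by_cases ha0 : a = 0
    · subst ha0
      rw [hins, span_zero_singleton, bot_sup_eq]
      exact (IH P).trans (sup_le_sup le_rfl (f_mono Ψ le_rfl))
    · have h1 : P ⊔ span ℝ ((insert a s : Finset (Fin n → ℝ)) : Set (Fin n → ℝ))
          = (P ⊔ span ℝ (s : Set (Fin n → ℝ))) ⊔ (ℝ ∙ a) := by
        rw [hins]
        rw [sup_comm (ℝ ∙ a), ← sup_assoc]
      rw [h1]
      refine (f_sup_point Ψ hΨ ha0 _).trans ?_
      have h2 : f Ψ (P ⊔ span ℝ (s : Set (Fin n → ℝ))) ≤ f Ψ P ⊔ f Ψ (span ℝ ((insert a s : Finset (Fin n → ℝ)) : Set (Fin n → ℝ))) :=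
        (IH P).trans (sup_le_sup le_rfl (f_mono Ψ (by rw [hins]; exact le_sup_right)))
      refine sup_le h2 ?_
      refine le_trans ?_ le_sup_right
      exact le_f Ψ ha0 (subset_span (by simp))

lemma f_sup_le (hΨ : LinesToLines Ψ) (P Q : Submodule ℝ (Fin n → ℝ)) :
    f Ψ (P ⊔ Q) ≤ f Ψ P ⊔ f Ψ Q := by
  obtain ⟨sQ, hsQ⟩ : ∃ s : Finset (Fin n → ℝ), span ℝ (s : Set (Fin n → ℝ)) = Q := by
    obtain ⟨S, hfin, hspan⟩ := Submodule.fg_def.1 (IsNoetherian.noetherian Q)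
    obtain ⟨t, rfl⟩ := Set.Finite.exists_finset_coe hfin
    exact ⟨t, hspan⟩
  rw [← hsQ]
  exact f_sup_finset Ψ hΨ P sQ

lemma f_sup (hΨ : LinesToLines Ψ) (P Q : Submodule ℝ (Fin n → ℝ)) :
    f Ψ (P ⊔ Q) = f Ψ P ⊔ f Ψ Q :=
  le_antisymm (f_sup_le Ψ hΨ P Q)
    (sup_le (f_mono Ψ le_sup_left) (f_mono Ψ le_sup_right))

lemma exists_finset_span_card (Q : Submodule ℝ (Fin n → ℝ)) :
    ∃ s : Finset (Fin n → ℝ), span ℝ (s : Set (Fin n → ℝ)) = Q ∧ s.card ≤ finrank ℝ Q := by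
  have b := Module.finBasis ℝ Q
  set m := finrank ℝ Q with hm
  let g : Fin m → (Fin n → ℝ) := fun i => (b i : Fin n → ℝ)
  refine ⟨Finset.univ.image g, ?_, ?_⟩
  · have h1 : (↑(Finset.univ.image g) : Set (Fin n → ℝ)) = Set.range g := by
      simp [Set.image_univ]
    rw [h1]
    have h2 : Set.range g = Q.subtype '' Set.range b := by
      rw [← Set.range_comp]; rfl
    rw [h2, ← Submodule.map_span, b.span_eq, Submodule.map_top, range_subtype]
  · exact (Finset.card_image_le).trans (by simp)

lemma f_card (hΨ : LinesToLines Ψ) (s : Finset (Fin n → ℝ)) :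
    finrank ℝ (f Ψ (span ℝ (s : Set (Fin n → ℝ)))) ≤ s.card := by
  induction s using Finset.induction_on with
  | empty => simp [f_bot]
  | @insert a s ha IH =>
    have hins : span ℝ ((insert a s : Finset (Fin n → ℝ)) : Set (Fin n → ℝ))
        = span ℝ (s : Set (Fin n → ℝ)) ⊔ (ℝ ∙ a) := by
      rw [Finset.coe_insert, Submodule.span_insert, sup_comm]
    by_cases ha0 : a = 0
    · subst ha0
      rw [hins, span_zero_singleton, sup_bot_eq]
      exact IH.trans (by
        rw [Finset.card_insert_of_notMem ha]
        omega)
    · have h1 : finrank ℝ (f Ψ (span ℝ ((insert a s : Finset (Fin n → ℝ)) : Set (Fin n → ℝ))))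
          ≤ finrank ℝ ((f Ψ (span ℝ (s : Set (Fin n → ℝ))) ⊔ (Ψ (pt a ha0)).1 : Submodule ℝ (Fin n → ℝ))) := by
        refine Submodule.finrank_mono ?_
        rw [hins]
        exact f_sup_point Ψ hΨ ha0 _
      have h2 := Submodule.finrank_sup_add_finrank_inf_eq
        (f Ψ (span ℝ (s : Set (Fin n → ℝ)))) ((Ψ (pt a ha0)).1)
      have h4 : finrank ℝ (Ψ (pt a ha0)).1 = 1 := (Ψ (pt a ha0)).2
      have h5 : s.card + 1 ≤ (insert a s).card := by
        rw [Finset.card_insert_of_notMem ha]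
      omega

lemma f_rank_le (hΨ : LinesToLines Ψ) (P : Submodule ℝ (Fin n → ℝ)) :
    finrank ℝ (f Ψ P) ≤ finrank ℝ P := by
  obtain ⟨s, hs, hcard⟩ := exists_finset_span_card P
  calc finrank ℝ (f Ψ P) = finrank ℝ (f Ψ (span ℝ (s : Set (Fin n → ℝ)))) := by rw [hs]
    _ ≤ s.card := f_card Ψ hΨ s
    _ ≤ finrank ℝ P := hcard

lemma f_top : f Ψ (⊤ : Submodule ℝ (Fin n → ℝ)) = ⊤ := by
  rw [eq_top_iff]
  intro w _
  by_cases hw : w = 0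
  · subst hw; exact zero_mem _
  · obtain ⟨u, hu, hrep⟩ := exists_rep (Ψ.symm (pt w hw))
    have : Ψ (pt u hu) = pt w hw := by rw [← hrep, Ψ.apply_symm_apply]
    have h1 : (Ψ (pt u hu)).1 ≤ f Ψ ⊤ := le_f Ψ hu trivial
    rw [this] at h1
    exact h1 (mem_span_singleton_self w)

lemma f_rank (hΨ : LinesToLines Ψ) (P : Submodule ℝ (Fin n → ℝ)) :
    finrank ℝ (f Ψ P) = finrank ℝ P := by
  obtain ⟨Q, hQ⟩ := Submodule.exists_isCompl P
  have h1 : P ⊔ Q = ⊤ := hQ.sup_eq_top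
  have h2 : finrank ℝ P + finrank ℝ Q = finrank ℝ (Fin n → ℝ) :=
    Submodule.finrank_add_eq_of_isCompl hQ
  have h3 : (⊤ : Submodule ℝ (Fin n → ℝ)) = f Ψ (P ⊔ Q) := by rw [h1, f_top]
  have h4 : finrank ℝ (Fin n → ℝ) ≤ finrank ℝ (f Ψ P) + finrank ℝ (f Ψ Q) := by
    have h4a : (⊤ : Submodule ℝ (Fin n → ℝ)) ≤ f Ψ P ⊔ f Ψ Q := by
      rw [h3]; exact f_sup_le Ψ hΨ P Q
    have h4b : finrank ℝ (⊤ : Submodule ℝ (Fin n → ℝ)) ≤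
        finrank ℝ ((f Ψ P ⊔ f Ψ Q : Submodule ℝ (Fin n → ℝ))) :=
      Submodule.finrank_mono h4a
    have h4c := Submodule.finrank_sup_add_finrank_inf_eq (f Ψ P) (f Ψ Q)
    rw [finrank_top] at h4b
    omega
  have h5 := f_rank_le Ψ hΨ P
  have h6 := f_rank_le Ψ hΨ Q
  omega

lemma f_point_pullback (hΨ : LinesToLines Ψ) {P : Submodule ℝ (Fin n → ℝ)} (q : PT n)
    (hq : q.1 ≤ f Ψ P) : (Ψ.symm q).1 ≤ P := by
  obtain ⟨u, hu, hrep⟩ := exists_rep (Ψ.symm q)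
  have hΨu : Ψ (pt u hu) = q := by rw [← hrep, Ψ.apply_symm_apply]
  have h1 : f Ψ (P ⊔ ℝ ∙ u) ≤ f Ψ P := by
    refine (f_sup_point Ψ hΨ hu P).trans ?_
    rw [hΨu]
    exact sup_le le_rfl hq
  have h2 : P ≤ P ⊔ ℝ ∙ u := le_sup_left
  have h3 : finrank ℝ ((P ⊔ ℝ ∙ u : Submodule ℝ (Fin n → ℝ))) ≤ finrank ℝ P := by
    rw [← f_rank Ψ hΨ (P ⊔ ℝ ∙ u), ← f_rank Ψ hΨ P]
    exact Submodule.finrank_mono h1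
  have h4 : P = P ⊔ ℝ ∙ u := Submodule.eq_of_le_of_finrank_le h2 h3
  rw [hrep]
  show (ℝ ∙ u : Submodule ℝ (Fin n → ℝ)) ≤ P
  rw [h4]
  exact le_sup_right

lemma f_point_mem (hΨ : LinesToLines Ψ) {P : Submodule ℝ (Fin n → ℝ)} {w : Fin n → ℝ}
    (hw : w ≠ 0) (hmem : w ∈ f Ψ P) : ∃ (u : Fin n → ℝ) (hu : u ≠ 0), u ∈ P ∧ Ψ (pt u hu) = pt w hw := by
  have h1 : (pt w hw).1 ≤ f Ψ P := pt_le hw hmem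
  have h2 := f_point_pullback Ψ hΨ (pt w hw) h1
  obtain ⟨u, hu, hrep⟩ := exists_rep (Ψ.symm (pt w hw))
  refine ⟨u, hu, ?_, by rw [← hrep, Ψ.apply_symm_apply]⟩
  rw [hrep] at h2
  exact h2 (mem_span_singleton_self u)

lemma f_inf (hΨ : LinesToLines Ψ) (P Q : Submodule ℝ (Fin n → ℝ)) :
    f Ψ (P ⊓ Q) = f Ψ P ⊓ f Ψ Q := by
  refine le_antisymm (le_inf (f_mono Ψ inf_le_left) (f_mono Ψ inf_le_right)) ?_
  intro w hw
  by_cases hw0 : w = 0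
  · subst hw0; exact zero_mem _
  · obtain ⟨u, hu, huP, hΨu⟩ := f_point_mem Ψ hΨ hw0 hw.1
    obtain ⟨u', hu', hu'Q, hΨu'⟩ := f_point_mem Ψ hΨ hw0 hw.2
    have : pt u hu = pt u' hu' := Ψ.injective (hΨu.trans hΨu'.symm)
    have huQ : u ∈ Q := by
      have : (ℝ ∙ u : Submodule ℝ (Fin n → ℝ)) = ℝ ∙ u' := congrArg Subtype.val this
      have h2 : u ∈ (ℝ ∙ u' : Submodule ℝ (Fin n → ℝ)) := this ▸ mem_span_singleton_self u
      exact (pt_le hu' hu'Q : (ℝ ∙ u' : Submodule ℝ (Fin n → ℝ)) ≤ Q) h2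
    have h3 : (Ψ (pt u hu)).1 ≤ f Ψ (P ⊓ Q) := le_f Ψ hu ⟨huP, huQ⟩
    rw [hΨu] at h3
    exact h3 (mem_span_singleton_self w)

/-! Coordinate tools -/

noncomputable def ee (i : Fin n) : Fin n → ℝ := Pi.single i 1

lemma ee_same (i : Fin n) : ee i i = 1 := Pi.single_eq_same i 1
lemma ee_ne {i k : Fin n} (h : k ≠ i) : ee i k = 0 := Pi.single_eq_of_ne h 1
lemma ee_nonzero (i : Fin n) : ee (n := n) i ≠ 0 := fun h => by
  have := congrFun h i
  rw [ee_same] at this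
  simp at this

lemma mem_sup_singleton_iff {u v x : Fin n → ℝ} :
    x ∈ ((ℝ ∙ u) ⊔ (ℝ ∙ v) : Submodule ℝ (Fin n → ℝ)) ↔ ∃ α β : ℝ, α • u + β • v = x := by
  rw [← Submodule.span_insert]
  exact Submodule.mem_span_pair

lemma sum_single_eq (v : Fin n → ℝ) : ∑ k, (v k) • ee (n := n) k = v := by
  have h : ∀ k, (v k) • ee (n := n) k = Pi.single k (v k) := by
    intro k
    ext m
    by_cases hm : m = k
    · subst hm; simp [ee_same, Pi.single_eq_same]
    · simp [ee_ne hm, Pi.single_eq_of_ne hm]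
  simp_rw [h]
  exact Finset.univ_sum_single v

lemma mem_span_ee_iff {S : Finset (Fin n)} {v : Fin n → ℝ} :
    v ∈ span ℝ (ee '' (S : Set (Fin n))) ↔ ∀ k ∉ S, v k = 0 := by
  constructor
  · intro hv k hk
    induction hv using Submodule.span_induction with
    | mem x hx =>
      obtain ⟨j, hj, rfl⟩ := hx
      exact ee_ne (fun h => hk (h ▸ hj))
    | zero => rfl
    | add x y _ _ hx hy =>
      show (x + y) k = 0
      rw [Pi.add_apply, hx, hy, add_zero]
    | smul c x _ hx =>
      show (c • x) k = 0
      rw [Pi.smul_apply, hx, smul_zero]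
  · intro h
    have hv : v = ∑ k ∈ S, (v k) • ee (n := n) k := by
      conv_lhs => rw [← sum_single_eq v]
      refine (Finset.sum_subset (Finset.subset_univ S) (fun x _ hx => ?_)).symm
      rw [h x hx, zero_smul]
    rw [hv]
    exact Submodule.sum_mem _ fun k hk =>
      Submodule.smul_mem _ _ (subset_span ⟨k, hk, rfl⟩)

/-! Parameterization of points on coordinate lines -/

lemma param_nz {i j : Fin n} (hij : i ≠ j) (y : ℝ) : ee i + y • ee j ≠ (0 : Fin n → ℝ) := by
  intro h
  have := congrFun h i
  simp [Pi.add_apply, Pi.smul_apply, ee_same, ee_ne hij] at this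

lemma param_inj {i j : Fin n} (hij : i ≠ j) {y y' : ℝ}
    (h : (ℝ ∙ (ee i + y • ee j) : Submodule ℝ (Fin n → ℝ)) = ℝ ∙ (ee i + y' • ee j)) :
    y = y' := by
  have h1 : ee i + y • ee j ∈ (ℝ ∙ (ee i + y' • ee j) : Submodule ℝ (Fin n → ℝ)) :=
    h ▸ mem_span_singleton_self _
  obtain ⟨c, hc⟩ := mem_span_singleton.1 h1
  have hci := congrFun hc i
  have hcj := congrFun hc j
  simp [Pi.add_apply, Pi.smul_apply, ee_same, ee_ne hij, ee_ne hij.symm] at hci hcj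
  subst hci
  rw [one_mul] at hcj
  exact hcj.symm

lemma exists_param {i j : Fin n} (hij : i ≠ j) {Q : Submodule ℝ (Fin n → ℝ)}
    (hQ1 : finrank ℝ Q = 1) (hle : Q ≤ (ℝ ∙ ee i) ⊔ (ℝ ∙ ee j))
    (hne : Q ≠ ℝ ∙ (ee j)) : ∃ y : ℝ, Q = ℝ ∙ (ee i + y • ee j) := by
  obtain ⟨w, hw, hrep⟩ := exists_rep ⟨Q, hQ1⟩
  have hrep' : Q = ℝ ∙ w := congrArg Subtype.val hrep
  obtain ⟨α, β, hαβ⟩ := mem_sup_singleton_iff.1 (hle (hrep' ▸ mem_span_singleton_self w))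
  by_cases hα : α = 0
  · exfalso
    apply hne
    rw [hrep']
    subst hα
    have hβ : β ≠ 0 := by
      rintro rfl
      simp at hαβ
      exact hw hαβ.symm
    have : w = β • ee j := by rw [← hαβ, zero_smul, zero_add]
    refine le_antisymm ((span_singleton_le_iff_mem _ _).2 ?_) ((span_singleton_le_iff_mem _ _).2 ?_)
    · rw [this]; exact smul_mem _ _ (mem_span_singleton_self _)
    · rw [this]
      exact mem_span_singleton.2 ⟨β⁻¹, by rw [smul_smul, inv_mul_cancel₀ hβ, one_smul]⟩
  · refine ⟨β / α, ?_⟩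
    rw [hrep']
    have hwα : w = α • (ee i + (β/α) • ee j) := by
      rw [← hαβ]
      rw [smul_add, smul_smul]
      field_simp
    refine le_antisymm ((span_singleton_le_iff_mem _ _).2 ?_) ((span_singleton_le_iff_mem _ _).2 ?_)
    · rw [hwα]; exact smul_mem _ _ (mem_span_singleton_self _)
    · exact mem_span_singleton.2 ⟨α⁻¹, by rw [hwα, smul_smul, inv_mul_cancel₀ hα, one_smul]⟩

/-! The geometric span identities -/

section Identities

variable {i j k : Fin n}

-- M1 / A1
lemma idM1 (hij : i ≠ j) (hik : i ≠ k) (hjk : j ≠ k) (b : ℝ) :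
    ((ℝ ∙ (ee i + b • ee j)) ⊔ (ℝ ∙ (ee i + ee k))) ⊓ ((ℝ ∙ (ee j)) ⊔ (ℝ ∙ (ee k)))
      = (ℝ ∙ (b • ee j - ee k) : Submodule ℝ (Fin n → ℝ)) := by
  refine le_antisymm ?_ (le_inf ((span_singleton_le_iff_mem _ _).2
    (mem_sup_singleton_iff.2 ⟨1, -1, by module⟩))
    ((span_singleton_le_iff_mem _ _).2 (mem_sup_singleton_iff.2 ⟨b, -1, by module⟩)))
  intro x hx
  obtain ⟨α, β, h1⟩ := mem_sup_singleton_iff.1 hx.1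
  obtain ⟨γ, δ, h2⟩ := mem_sup_singleton_iff.1 hx.2
  have hi := congrFun (h1.trans h2.symm) i
  simp [Pi.add_apply, Pi.smul_apply, Pi.sub_apply, ee_same, ee_ne hij, ee_ne hik,
    ee_ne hij.symm, ee_ne hjk, ee_ne hik.symm, ee_ne hjk.symm] at hi
  refine mem_span_singleton.2 ⟨α, ?_⟩
  rw [← h1]
  have hβ : β = -α := by linarith
  rw [hβ]; module

-- M2
lemma idM2 (hij : i ≠ j) (hik : i ≠ k) (hjk : j ≠ k) (a : ℝ) :
    ((ℝ ∙ (ee i + a • ee j)) ⊔ (ℝ ∙ (ee j - ee k))) ⊓ ((ℝ ∙ (ee i)) ⊔ (ℝ ∙ (ee k)))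
      = (ℝ ∙ (ee i + a • ee k) : Submodule ℝ (Fin n → ℝ)) := by
  refine le_antisymm ?_ (le_inf ((span_singleton_le_iff_mem _ _).2
    (mem_sup_singleton_iff.2 ⟨1, -a, by module⟩))
    ((span_singleton_le_iff_mem _ _).2 (mem_sup_singleton_iff.2 ⟨1, a, by module⟩)))
  intro x hx
  obtain ⟨α, β, h1⟩ := mem_sup_singleton_iff.1 hx.1
  obtain ⟨γ, δ, h2⟩ := mem_sup_singleton_iff.1 hx.2
  have hj := congrFun (h1.trans h2.symm) j
  simp [Pi.add_apply, Pi.smul_apply, Pi.sub_apply, ee_same, ee_ne hij, ee_ne hik,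
    ee_ne hij.symm, ee_ne hjk, ee_ne hik.symm, ee_ne hjk.symm] at hj
  refine mem_span_singleton.2 ⟨α, ?_⟩
  rw [← h1]
  have hβ : β = -(α * a) := by linarith
  rw [hβ]; module

-- M3
lemma idM3 (hij : i ≠ j) (hik : i ≠ k) (hjk : j ≠ k) (a b : ℝ) :
    ((ℝ ∙ (ee i + a • ee k)) ⊔ (ℝ ∙ (b • ee j - ee k))) ⊓ ((ℝ ∙ (ee i)) ⊔ (ℝ ∙ (ee j)))
      = (ℝ ∙ (ee i + (a * b) • ee j) : Submodule ℝ (Fin n → ℝ)) := by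
  refine le_antisymm ?_ (le_inf ((span_singleton_le_iff_mem _ _).2
    (mem_sup_singleton_iff.2 ⟨1, a, by module⟩))
    ((span_singleton_le_iff_mem _ _).2 (mem_sup_singleton_iff.2 ⟨1, a * b, by module⟩)))
  intro x hx
  obtain ⟨α, β, h1⟩ := mem_sup_singleton_iff.1 hx.1
  obtain ⟨γ, δ, h2⟩ := mem_sup_singleton_iff.1 hx.2
  have hk' := congrFun (h1.trans h2.symm) k
  simp [Pi.add_apply, Pi.smul_apply, Pi.sub_apply, ee_same, ee_ne hij, ee_ne hik,
    ee_ne hij.symm, ee_ne hjk, ee_ne hik.symm, ee_ne hjk.symm] at hk'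
  refine mem_span_singleton.2 ⟨α, ?_⟩
  rw [← h1]
  have hβ : β = α * a := by linarith
  rw [hβ]; module

-- A2
lemma idA2 (hij : i ≠ j) (hik : i ≠ k) (hjk : j ≠ k) (a : ℝ) :
    ((ℝ ∙ (ee i + a • ee j)) ⊔ (ℝ ∙ (ee k))) ⊓ ((ℝ ∙ (ee j)) ⊔ (ℝ ∙ (ee i + ee k)))
      = (ℝ ∙ (ee i + a • ee j + ee k) : Submodule ℝ (Fin n → ℝ)) := by
  refine le_antisymm ?_ (le_inf ((span_singleton_le_iff_mem _ _).2
    (mem_sup_singleton_iff.2 ⟨1, 1, by module⟩))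
    ((span_singleton_le_iff_mem _ _).2 (mem_sup_singleton_iff.2 ⟨a, 1, by module⟩)))
  intro x hx
  obtain ⟨α, β, h1⟩ := mem_sup_singleton_iff.1 hx.1
  obtain ⟨γ, δ, h2⟩ := mem_sup_singleton_iff.1 hx.2
  have hi := congrFun (h1.trans h2.symm) i
  have hk' := congrFun (h1.trans h2.symm) k
  simp [Pi.add_apply, Pi.smul_apply, Pi.sub_apply, ee_same, ee_ne hij, ee_ne hik,
    ee_ne hij.symm, ee_ne hjk, ee_ne hik.symm, ee_ne hjk.symm] at hi hk'
  refine mem_span_singleton.2 ⟨α, ?_⟩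
  rw [← h1]
  have hβ : β = α := by linarith
  rw [hβ]; module

-- A3
lemma idA3 (hij : i ≠ j) (hik : i ≠ k) (hjk : j ≠ k) (a b : ℝ) :
    ((ℝ ∙ (ee i + a • ee j + ee k)) ⊔ (ℝ ∙ (b • ee j - ee k))) ⊓ ((ℝ ∙ (ee i)) ⊔ (ℝ ∙ (ee j)))
      = (ℝ ∙ (ee i + (a + b) • ee j) : Submodule ℝ (Fin n → ℝ)) := by
  refine le_antisymm ?_ (le_inf ((span_singleton_le_iff_mem _ _).2
    (mem_sup_singleton_iff.2 ⟨1, 1, by module⟩))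
    ((span_singleton_le_iff_mem _ _).2 (mem_sup_singleton_iff.2 ⟨1, a + b, by module⟩)))
  intro x hx
  obtain ⟨α, β, h1⟩ := mem_sup_singleton_iff.1 hx.1
  obtain ⟨γ, δ, h2⟩ := mem_sup_singleton_iff.1 hx.2
  have hk' := congrFun (h1.trans h2.symm) k
  simp [Pi.add_apply, Pi.smul_apply, Pi.sub_apply, ee_same, ee_ne hij, ee_ne hik,
    ee_ne hij.symm, ee_ne hjk, ee_ne hik.symm, ee_ne hjk.symm] at hk'
  refine mem_span_singleton.2 ⟨α, ?_⟩
  rw [← h1]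
  have hβ : β = α := by linarith
  rw [hβ]; module

end Identities

/-! Unit identity and sum helpers -/

lemma sum_smul_ee_apply (s : Finset (Fin n)) (x : Fin n → ℝ) (m : Fin n) :
    (∑ j ∈ s, x j • ee (n := n) j) m = if m ∈ s then x m else 0 := by
  rw [Finset.sum_apply]
  have h : ∀ j ∈ s, (x j • ee (n := n) j) m = if m = j then x j else 0 := by
    intro j _
    rw [Pi.smul_apply, smul_eq_mul]
    by_cases hmj : m = j
    · subst hmj; rw [ee_same, if_pos rfl, mul_one]
    · rw [ee_ne hmj, if_neg hmj, mul_zero]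
  rw [Finset.sum_congr rfl h, Finset.sum_ite_eq s m x]

lemma one_eq_sum : (1 : Fin n → ℝ) = ∑ k, ee (n := n) k := by
  have := sum_single_eq (1 : Fin n → ℝ)
  simpa using this.symm

lemma idU1 {i j : Fin n} (hij : i ≠ j) :
    ((ℝ ∙ (ee i)) ⊔ (ℝ ∙ (ee j))) ⊓
      ((ℝ ∙ (1 : Fin n → ℝ)) ⊔ span ℝ (ee '' ↑(Finset.univ \ {i, j} : Finset (Fin n))))
      = (ℝ ∙ (ee i + ee j) : Submodule ℝ (Fin n → ℝ)) := by
  set S : Finset (Fin n) := Finset.univ \ {i, j} with hS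
  have hiS : i ∉ S := by simp [hS]
  have hjS : j ∉ S := by simp [hS]
  refine le_antisymm ?_ (le_inf ((span_singleton_le_iff_mem _ _).2
    (mem_sup_singleton_iff.2 ⟨1, 1, by module⟩)) ((span_singleton_le_iff_mem _ _).2 ?_))
  · intro x hx
    obtain ⟨α, β, h1⟩ := mem_sup_singleton_iff.1 hx.1
    obtain ⟨y, hy, z, hz, hyz⟩ := mem_sup.1 hx.2
    obtain ⟨c, rfl⟩ := mem_span_singleton.1 hy
    have hzi : z i = 0 := mem_span_ee_iff.1 hz i hiS
    have hzj : z j = 0 := mem_span_ee_iff.1 hz j hjS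
    have hi := congrFun (h1.trans hyz.symm) i
    have hj := congrFun (h1.trans hyz.symm) j
    simp [Pi.add_apply, Pi.smul_apply, ee_same, ee_ne hij, ee_ne hij.symm, hzi, hzj] at hi hj
    refine mem_span_singleton.2 ⟨α, ?_⟩
    rw [← h1]
    have hβ : β = α := by rw [hi, ← hj]
    rw [hβ]; module
  · refine mem_sup.2 ⟨1, mem_span_singleton_self _, -(∑ k ∈ S, ee (n := n) k),
      neg_mem (Submodule.sum_mem _ fun k hk => subset_span ⟨k, hk, rfl⟩), ?_⟩
    ext m
    have hsum : (∑ k ∈ S, ee (n := n) k) m = if m ∈ S then 1 else 0 := by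
      have := sum_smul_ee_apply S (fun _ => (1:ℝ)) m
      simpa using this
    simp only [Pi.add_apply, Pi.neg_apply, Pi.one_apply, hsum]
    by_cases hmi : m = i
    · subst hmi
      rw [if_neg hiS, ee_same, ee_ne hij]
      norm_num
    · by_cases hmj : m = j
      · subst hmj
        rw [if_neg hjS, ee_same, ee_ne hij.symm]
        norm_num
      · have hmS : m ∈ S := by simp [hS, hmi, hmj]
        rw [if_pos hmS, ee_ne hmi, ee_ne hmj]
        norm_num

-- S1: the inductive step identity for general points
lemma idS1 {i a : Fin n} {s : Finset (Fin n)} (hia : i ≠ a) (his : i ∉ s) (has : a ∉ s)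
    (x : Fin n → ℝ) :
    ((ℝ ∙ (ee i + ∑ j ∈ s, x j • ee j)) ⊔ (ℝ ∙ (ee a))) ⊓
      ((ℝ ∙ (ee i + x a • ee a)) ⊔ span ℝ (ee '' (s : Set (Fin n))))
      = (ℝ ∙ (ee i + ∑ j ∈ s, x j • ee j + x a • ee a) : Submodule ℝ (Fin n → ℝ)) := by
  set w' : Fin n → ℝ := ee i + ∑ j ∈ s, x j • ee j with hw'
  have hw'i : w' i = 1 := by
    rw [hw', Pi.add_apply, ee_same, sum_smul_ee_apply, if_neg his, add_zero]
  have hw'a : w' a = 0 := by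
    rw [hw', Pi.add_apply, ee_ne (Ne.symm hia), sum_smul_ee_apply, if_neg has, add_zero]
  refine le_antisymm ?_ (le_inf ((span_singleton_le_iff_mem _ _).2
    (mem_sup_singleton_iff.2 ⟨1, x a, by module⟩)) ((span_singleton_le_iff_mem _ _).2 ?_))
  · intro v hv
    obtain ⟨α, β, h1⟩ := mem_sup_singleton_iff.1 hv.1
    obtain ⟨y, hy, z, hz, hyz⟩ := mem_sup.1 hv.2
    obtain ⟨γ, rfl⟩ := mem_span_singleton.1 hy
    have hzi : z i = 0 := mem_span_ee_iff.1 hz i his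
    have hza : z a = 0 := mem_span_ee_iff.1 hz a has
    have hi := congrFun (h1.trans hyz.symm) i
    have ha := congrFun (h1.trans hyz.symm) a
    simp only [Pi.add_apply, Pi.smul_apply, smul_eq_mul, hw'i, hw'a, hzi, hza,
      ee_same, ee_ne hia, ee_ne (Ne.symm hia)] at hi ha
    -- hi : α * 1 + β * 0 = γ * (1 + x a * 0) + 0, ha : α * 0 + β * 1 = γ * (0 + x a * 1) + 0
    have hαγ : α = γ := by
      rw [mul_one] at hi
      simpa using hi
    have hβ : β = α * x a := by
      rw [mul_one] at ha
      rw [hαγ]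
      simpa using ha
    refine mem_span_singleton.2 ⟨α, ?_⟩
    rw [← h1, hβ]
    rw [hw']
    module
  · refine mem_sup.2 ⟨ee i + x a • ee a, mem_span_singleton_self _,
      ∑ j ∈ s, x j • ee j, Submodule.sum_mem _ fun j hj =>
        Submodule.smul_mem _ _ (subset_span ⟨j, hj, rfl⟩), by rw [hw']; module⟩

/-! The coordinate map σ -/

section Sigma

variable (Ψ : PT n ≃ PT n) (hΨ : LinesToLines Ψ)
    (hfix : ∀ i : Fin n, f Ψ (ℝ ∙ (ee i)) = ℝ ∙ (ee i))

include hΨ hfix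

lemma f_fix_span_ee (S : Finset (Fin n)) :
    f Ψ (span ℝ (ee '' (S : Set (Fin n)))) = span ℝ (ee '' (S : Set (Fin n))) := by
  induction S using Finset.induction_on with
  | empty => simp [f_bot]
  | @insert a s ha IH =>
    have h1 : (ee '' ((insert a s : Finset (Fin n)) : Set (Fin n))) =
        insert (ee a) (ee '' (s : Set (Fin n))) := by
      rw [Finset.coe_insert, Set.image_insert_eq]
    rw [h1, Submodule.span_insert, f_sup Ψ hΨ, hfix, IH]

lemma f_param {i j : Fin n} (hij : i ≠ j) (x : ℝ) :
    ∃ y : ℝ, f Ψ (ℝ ∙ (ee i + x • ee j)) = ℝ ∙ (ee i + y • ee j) := by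
  have hnz := param_nz hij x
  have hrank : finrank ℝ (f Ψ (ℝ ∙ (ee i + x • ee j))) = 1 := by
    rw [f_rank Ψ hΨ, finrank_span_singleton hnz]
  have hle : f Ψ (ℝ ∙ (ee i + x • ee j)) ≤ (ℝ ∙ (ee i)) ⊔ (ℝ ∙ (ee j)) := by
    have h1 : (ℝ ∙ (ee i + x • ee j) : Submodule ℝ (Fin n → ℝ)) ≤ (ℝ ∙ (ee i)) ⊔ (ℝ ∙ (ee j)) :=
      (span_singleton_le_iff_mem _ _).2 (mem_sup_singleton_iff.2 ⟨1, x, by module⟩)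
    calc f Ψ (ℝ ∙ (ee i + x • ee j)) ≤ f Ψ ((ℝ ∙ (ee i)) ⊔ (ℝ ∙ (ee j))) := f_mono Ψ h1
      _ = (ℝ ∙ (ee i)) ⊔ (ℝ ∙ (ee j)) := by rw [f_sup Ψ hΨ, hfix, hfix]
  have hne : f Ψ (ℝ ∙ (ee i + x • ee j)) ≠ ℝ ∙ (ee j) := by
    intro hcon
    have h1 : f Ψ (ℝ ∙ (ee i + x • ee j)) = f Ψ (ℝ ∙ (ee j)) := by rw [hcon, hfix]
    rw [f_span_singleton Ψ hnz, f_span_singleton Ψ (ee_nonzero j)] at h1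
    have h2 : pt (ee i + x • ee j) hnz = pt (ee j) (ee_nonzero j) :=
      Ψ.injective (Subtype.ext h1)
    have h4 : (ℝ ∙ (ee i + x • ee j) : Submodule ℝ (Fin n → ℝ)) = ℝ ∙ (ee j) :=
      congrArg Subtype.val h2
    have h3 : ee i + x • ee j ∈ (ℝ ∙ (ee j) : Submodule ℝ (Fin n → ℝ)) := by
      rw [← h4]; exact mem_span_singleton_self _
    obtain ⟨c, hc⟩ := mem_span_singleton.1 h3
    have := congrFun hc i
    simp [Pi.add_apply, Pi.smul_apply, ee_same, ee_ne hij] at this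
  exact exists_param hij hrank hle hne

noncomputable def sig (i j : Fin n) (x : ℝ) : ℝ :=
  if hij : i ≠ j then (f_param Ψ hΨ hfix hij x).choose else 0

lemma sig_spec {i j : Fin n} (hij : i ≠ j) (x : ℝ) :
    f Ψ (ℝ ∙ (ee i + x • ee j)) = ℝ ∙ (ee i + sig Ψ hΨ hfix i j x • ee j) := by
  rw [sig, dif_pos hij]
  exact (f_param Ψ hΨ hfix hij x).choose_spec

lemma sig_unique {i j : Fin n} (hij : i ≠ j) {x y : ℝ}
    (h : f Ψ (ℝ ∙ (ee i + x • ee j)) = ℝ ∙ (ee i + y • ee j)) :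
    sig Ψ hΨ hfix i j x = y :=
  param_inj hij ((sig_spec Ψ hΨ hfix hij x).symm.trans h)

lemma sig_zero {i j : Fin n} (hij : i ≠ j) : sig Ψ hΨ hfix i j 0 = 0 := by
  refine sig_unique Ψ hΨ hfix hij ?_
  rw [show ee i + (0:ℝ) • ee j = ee (n := n) i by rw [zero_smul, add_zero]]
  exact hfix i

variable (hone : f Ψ (ℝ ∙ (1 : Fin n → ℝ)) = ℝ ∙ (1 : Fin n → ℝ))

include hone

lemma sig_one {i j : Fin n} (hij : i ≠ j) : sig Ψ hΨ hfix i j 1 = 1 := by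
  refine sig_unique Ψ hΨ hfix hij ?_
  have h1 := idU1 hij
  have h2 : f Ψ (ℝ ∙ (ee i + ee j)) = ℝ ∙ (ee i + ee j) := by
    conv_lhs => rw [← h1]
    rw [f_inf Ψ hΨ, f_sup Ψ hΨ, f_sup Ψ hΨ, hfix, hfix, hone, f_fix_span_ee Ψ hΨ hfix]
    exact h1
  rw [show ee i + (1:ℝ) • ee j = ee i + ee (n := n) j by rw [one_smul]]
  exact h2

lemma f_fix_unit_pair {i j : Fin n} (hij : i ≠ j) :
    f Ψ (ℝ ∙ (ee i + ee j)) = ℝ ∙ (ee i + ee j) := by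
  have := sig_spec Ψ hΨ hfix hij 1
  rw [one_smul] at this
  rw [this, sig_one Ψ hΨ hfix hone hij, one_smul]

lemma sig_add {i j k : Fin n} (hij : i ≠ j) (hik : i ≠ k) (hjk : j ≠ k) (a b : ℝ) :
    sig Ψ hΨ hfix i j (a + b) = sig Ψ hΨ hfix i j a + sig Ψ hΨ hfix i j b := by
  set σ := sig Ψ hΨ hfix i j with hσ
  -- image of B* = span (b • ee j - ee k)
  have hBstar : f Ψ (ℝ ∙ (b • ee j - ee k)) = ℝ ∙ (σ b • ee j - ee k) := by
    conv_lhs => rw [← idM1 hij hik hjk b]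
    rw [f_inf Ψ hΨ, f_sup Ψ hΨ, f_sup Ψ hΨ, sig_spec Ψ hΨ hfix hij b,
      f_fix_unit_pair Ψ hΨ hfix hone hik, hfix, hfix]
    exact idM1 hij hik hjk (σ b)
  -- image of A' = span (ee i + a • ee j + ee k)
  have hA2 : f Ψ (ℝ ∙ (ee i + a • ee j + ee k)) = ℝ ∙ (ee i + σ a • ee j + ee k) := by
    conv_lhs => rw [← idA2 hij hik hjk a]
    rw [f_inf Ψ hΨ, f_sup Ψ hΨ, f_sup Ψ hΨ, sig_spec Ψ hΨ hfix hij a,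
      f_fix_unit_pair Ψ hΨ hfix hone hik, hfix, hfix]
    exact idA2 hij hik hjk (σ a)
  refine sig_unique Ψ hΨ hfix hij ?_
  conv_lhs => rw [← idA3 hij hik hjk a b]
  rw [f_inf Ψ hΨ, f_sup Ψ hΨ, f_sup Ψ hΨ, hA2, hBstar, hfix, hfix]
  exact idA3 hij hik hjk (σ a) (σ b)

lemma sig_neg_one {i j : Fin n} (hn : 3 ≤ n) (hij : i ≠ j) : sig Ψ hΨ hfix i j (-1) = -1 := by
  obtain ⟨k, hik, hjk⟩ : ∃ k : Fin n, i ≠ k ∧ j ≠ k := by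
    by_contra hcon
    push_neg at hcon
    have hsub : (Finset.univ : Finset (Fin n)) ⊆ {i, j} := by
      intro m _
      by_cases hmi : m = i
      · simp [hmi]
      · simp [hcon m (Ne.symm hmi)]
    have := Finset.card_le_card hsub
    have h2 : ({i, j} : Finset (Fin n)).card ≤ 2 := Finset.card_insert_le _ _ |>.trans (by simp)
    simp [Finset.card_univ] at this
    omega
  have h1 := sig_add Ψ hΨ hfix hone hij hik hjk 1 (-1)
  have h2 : (1 : ℝ) + (-1) = 0 := by norm_num
  rw [h2, sig_zero Ψ hΨ hfix hij, sig_one Ψ hΨ hfix hone hij] at h1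
  linarith

lemma sig_mul {i j k : Fin n} (hn : 3 ≤ n) (hij : i ≠ j) (hik : i ≠ k) (hjk : j ≠ k) (a b : ℝ) :
    sig Ψ hΨ hfix i j (a * b) = sig Ψ hΨ hfix i j a * sig Ψ hΨ hfix i j b := by
  set σ := sig Ψ hΨ hfix i j with hσ
  have hD' : f Ψ (ℝ ∙ (ee j - ee k)) = ℝ ∙ (ee j - ee k) := by
    have h1 := sig_spec Ψ hΨ hfix hjk (-1)
    rw [show ee j + (-1:ℝ) • ee k = ee j - ee (n := n) k by module] at h1
    rw [h1, sig_neg_one Ψ hΨ hfix hone hn hjk]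
    rw [show ee j + (-1:ℝ) • ee k = ee j - ee (n := n) k by module]
  have hBstar : f Ψ (ℝ ∙ (b • ee j - ee k)) = ℝ ∙ (σ b • ee j - ee k) := by
    conv_lhs => rw [← idM1 hij hik hjk b]
    rw [f_inf Ψ hΨ, f_sup Ψ hΨ, f_sup Ψ hΨ, sig_spec Ψ hΨ hfix hij b,
      f_fix_unit_pair Ψ hΨ hfix hone hik, hfix, hfix]
    exact idM1 hij hik hjk (σ b)
  have hAdag : f Ψ (ℝ ∙ (ee i + a • ee k)) = ℝ ∙ (ee i + σ a • ee k) := by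
    conv_lhs => rw [← idM2 hij hik hjk a]
    rw [f_inf Ψ hΨ, f_sup Ψ hΨ, f_sup Ψ hΨ, sig_spec Ψ hΨ hfix hij a, hD', hfix, hfix]
    exact idM2 hij hik hjk (σ a)
  refine sig_unique Ψ hΨ hfix hij ?_
  conv_lhs => rw [← idM3 hij hik hjk a b]
  rw [f_inf Ψ hΨ, f_sup Ψ hΨ, f_sup Ψ hΨ, hAdag, hBstar, hfix, hfix]
  exact idM3 hij hik hjk (σ a) (σ b)

lemma sig_id {i j : Fin n} (hn : 3 ≤ n) (hij : i ≠ j) (x : ℝ) : sig Ψ hΨ hfix i j x = x := by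
  obtain ⟨k, hik, hjk⟩ : ∃ k : Fin n, i ≠ k ∧ j ≠ k := by
    by_contra hcon
    push_neg at hcon
    have hsub : (Finset.univ : Finset (Fin n)) ⊆ {i, j} := by
      intro m _
      by_cases hmi : m = i
      · simp [hmi]
      · simp [hcon m (Ne.symm hmi)]
    have := Finset.card_le_card hsub
    have h2 : ({i, j} : Finset (Fin n)).card ≤ 2 := Finset.card_insert_le _ _ |>.trans (by simp)
    simp [Finset.card_univ] at this
    omega
  let σhom : ℝ →+* ℝ :=
    { toFun := sig Ψ hΨ hfix i j
      map_one' := sig_one Ψ hΨ hfix hone hij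
      map_mul' := fun a b => sig_mul Ψ hΨ hfix hone hn hij hik hjk a b
      map_zero' := sig_zero Ψ hΨ hfix hij
      map_add' := fun a b => sig_add Ψ hΨ hfix hone hij hik hjk a b }
  have : σhom = RingHom.id ℝ := Subsingleton.elim _ _
  exact congrFun (congrArg (fun g : ℝ →+* ℝ => (g : ℝ → ℝ)) this) x

end Sigma

/-! Core theorem: a normalized collineation is the identity -/

section Core

variable (Ψ : PT n ≃ PT n) (hΨ : LinesToLines Ψ)
    (hfix : ∀ i : Fin n, f Ψ (ℝ ∙ (ee i)) = ℝ ∙ (ee i))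
    (hone : f Ψ (ℝ ∙ (1 : Fin n → ℝ)) = ℝ ∙ (1 : Fin n → ℝ))
    (hn : 3 ≤ n)

include hΨ hfix hone hn

lemma f_fix_combo {i : Fin n} (s : Finset (Fin n)) (his : i ∉ s) (x : Fin n → ℝ) :
    f Ψ (ℝ ∙ (ee i + ∑ j ∈ s, x j • ee j)) = ℝ ∙ (ee i + ∑ j ∈ s, x j • ee j) := by
  induction s using Finset.induction_on with
  | empty =>
    rw [show ee i + ∑ j ∈ (∅ : Finset (Fin n)), x j • ee j = ee (n := n) i by
      rw [Finset.sum_empty, add_zero]]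
    exact hfix i
  | @insert a s ha IH =>
    have hia : i ≠ a := fun h => his (h ▸ Finset.mem_insert_self a s)
    have his' : i ∉ s := fun h => his (Finset.mem_insert_of_mem h)
    have hvec : ee i + ∑ j ∈ insert a s, x j • ee j
        = ee i + ∑ j ∈ s, x j • ee j + x a • ee a := by
      rw [Finset.sum_insert ha]; module
    have hparam : f Ψ (ℝ ∙ (ee i + x a • ee a)) = ℝ ∙ (ee i + x a • ee a) := by
      rw [sig_spec Ψ hΨ hfix hia (x a), sig_id Ψ hΨ hfix hone hn hia (x a)]
    rw [hvec]
    conv_lhs => rw [← idS1 hia his' ha x]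
    rw [f_inf Ψ hΨ, f_sup Ψ hΨ, f_sup Ψ hΨ, IH his', hfix a, hparam,
      f_fix_span_ee Ψ hΨ hfix]
    exact idS1 hia his' ha x

lemma f_fix_point {w : Fin n → ℝ} (hw : w ≠ 0) : f Ψ (ℝ ∙ w) = ℝ ∙ w := by
  obtain ⟨i, hi⟩ := Function.ne_iff.1 hw
  have hi' : w i ≠ 0 := hi
  set w₀ : Fin n → ℝ := (w i)⁻¹ • w with hw₀
  have hspan : (ℝ ∙ w₀ : Submodule ℝ (Fin n → ℝ)) = ℝ ∙ w :=
    span_singleton_smul_eq (isUnit_iff_ne_zero.2 (inv_ne_zero hi')) w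
  have hw₀i : w₀ i = 1 := by
    rw [hw₀, Pi.smul_apply, smul_eq_mul, inv_mul_cancel₀ hi']
  have hdecomp : w₀ = ee i + ∑ j ∈ Finset.univ.erase i, w₀ j • ee j := by
    have h1 : ∑ j, w₀ j • ee (n := n) j = w₀ := sum_single_eq w₀
    have h2 : w₀ i • ee (n := n) i + ∑ j ∈ Finset.univ.erase i, w₀ j • ee j
        = ∑ j, w₀ j • ee (n := n) j :=
      Finset.add_sum_erase _ (fun j => w₀ j • ee (n := n) j) (Finset.mem_univ i)
    rw [hw₀i, one_smul] at h2
    conv_lhs => rw [← h1, ← h2]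
  rw [← hspan, hdecomp]
  exact f_fix_combo Ψ hΨ hfix hone hn (Finset.univ.erase i) (Finset.notMem_erase i _) w₀

lemma psi_fix : ∀ W : PT n, Ψ W = W := by
  intro W
  obtain ⟨w, hw, rfl⟩ := exists_rep W
  refine Subtype.ext ?_
  rw [← f_span_singleton Ψ hw, f_fix_point Ψ hΨ hfix hone hn hw]
  rfl

end Core

end FTPG

open FTPG

theorem fundamental_theorem_projective_geometry (n : ℕ) (hn : 3 ≤ n)
    (Ψ : {W : Submodule ℝ (Fin n → ℝ) // Module.finrank ℝ W = 1} ≃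
         {W : Submodule ℝ (Fin n → ℝ) // Module.finrank ℝ W = 1})
    (hΨ : ∀ P : Submodule ℝ (Fin n → ℝ), Module.finrank ℝ P = 2 →
      ∃ Q : Submodule ℝ (Fin n → ℝ), Module.finrank ℝ Q = 2 ∧
        ∀ W : {W : Submodule ℝ (Fin n → ℝ) // Module.finrank ℝ W = 1},
          W.1 ≤ P → (Ψ W).1 ≤ Q) :
    ∃ Λ : (Fin n → ℝ) ≃ₗ[ℝ] (Fin n → ℝ),
      ∀ W : {W : Submodule ℝ (Fin n → ℝ) // Module.finrank ℝ W = 1},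
        (Ψ W).1 = Submodule.map (Λ : (Fin n → ℝ) →ₗ[ℝ] (Fin n → ℝ)) W.1 := by
  classical
  have hL : LinesToLines Ψ := hΨ
  -- representatives for images of the coordinate points
  choose w hw hrep using fun i : Fin n => exists_rep (Ψ (pt (ee i) (ee_nonzero i)))
  -- f maps coordinate spans to spans of the w's
  have f_w_span : ∀ S : Finset (Fin n),
      f Ψ (Submodule.span ℝ (ee '' (S : Set (Fin n)))) = Submodule.span ℝ (w '' (S : Set (Fin n))) := by
    intro S
    induction S using Finset.induction_on with
    | empty => simp [f_bot]
    | @insert a s ha IH =>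
      rw [Finset.coe_insert, Set.image_insert_eq, Submodule.span_insert, f_sup Ψ hL,
        f_span_singleton Ψ (ee_nonzero a), hrep a, IH]
      conv_rhs => rw [Set.image_insert_eq, Submodule.span_insert]
      rfl
  have htop_ee : (⊤ : Submodule ℝ (Fin n → ℝ))
      = Submodule.span ℝ (ee '' ((Finset.univ : Finset (Fin n)) : Set (Fin n))) :=
    le_antisymm (fun v _ => mem_span_ee_iff.2 (fun k hk => absurd (Finset.mem_univ k) hk)) le_top
  have htop_w : Submodule.span ℝ (w '' ((Finset.univ : Finset (Fin n)) : Set (Fin n))) = ⊤ := by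
    rw [← f_w_span Finset.univ, ← htop_ee, f_top]
  -- basis from the w's
  have hcard : Fintype.card (Fin n) = Module.finrank ℝ (Fin n → ℝ) := by
    simp [Module.finrank_fin_fun]
  have hle : ⊤ ≤ Submodule.span ℝ (Set.range w) := by
    rw [← Set.image_univ, ← Finset.coe_univ, htop_w]
  let bw : Basis (Fin n) ℝ (Fin n → ℝ) := basisOfTopLeSpanOfCardEqFinrank w hle hcard
  have hbw : ∀ i, bw i = w i := fun i =>
    congrFun (coe_basisOfTopLeSpanOfCardEqFinrank w hle hcard) i
  -- the unit point
  have h1nz : (1 : Fin n → ℝ) ≠ 0 := by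
    intro h
    have := congrFun h ⟨0, by omega⟩
    norm_num at this
  obtain ⟨u', hu', hrepu⟩ := exists_rep (Ψ (pt 1 h1nz))
  set c : Fin n → ℝ := fun i => bw.repr u' i with hc_def
  have hc : ∀ i, c i ≠ 0 := by
    intro i hci
    have hsupp : ((bw.repr u').support : Set (Fin n)) ⊆ ((Finset.univ.erase i : Finset (Fin n)) : Set (Fin n)) := by
      intro j hj
      have hj' : bw.repr u' j ≠ 0 := Finsupp.mem_support_iff.1 hj
      have hji : j ≠ i := fun h => hj' (h ▸ hci)
      simp [Finset.mem_erase, hji]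
    have hu'mem : u' ∈ Submodule.span ℝ (bw '' ((Finset.univ.erase i : Finset (Fin n)) : Set (Fin n))) :=
      bw.mem_span_image.2 hsupp
    have him : bw '' ((Finset.univ.erase i : Finset (Fin n)) : Set (Fin n))
        = w '' ((Finset.univ.erase i : Finset (Fin n)) : Set (Fin n)) := by
      apply Set.image_congr
      intro j _
      exact hbw j
    have hmeet : (ℝ ∙ (1 : Fin n → ℝ)) ⊓
        Submodule.span ℝ (ee '' ((Finset.univ.erase i : Finset (Fin n)) : Set (Fin n))) = ⊥ := by
      rw [eq_bot_iff]
      rintro v ⟨hv1, hv2⟩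
      obtain ⟨c0, rfl⟩ := Submodule.mem_span_singleton.1 hv1
      have hvi : (c0 • (1 : Fin n → ℝ)) i = 0 :=
        mem_span_ee_iff.1 hv2 i (Finset.notMem_erase i _)
      simp only [Pi.smul_apply, Pi.one_apply, smul_eq_mul, mul_one] at hvi
      subst hvi
      simp
    have hbot : f Ψ ((ℝ ∙ (1 : Fin n → ℝ)) ⊓
        Submodule.span ℝ (ee '' ((Finset.univ.erase i : Finset (Fin n)) : Set (Fin n)))) = ⊥ := by
      rw [hmeet, f_bot]
    rw [f_inf Ψ hL, f_w_span, f_span_singleton Ψ h1nz, hrepu] at hbot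
    have hu'in : u' ∈ (⊥ : Submodule ℝ (Fin n → ℝ)) := by
      rw [← hbot]
      exact ⟨Submodule.mem_span_singleton_self u', him ▸ hu'mem⟩
    exact hu' ((Submodule.mem_bot ℝ).1 hu'in)
  -- rescaled basis
  let cu : Fin n → ℝˣ := fun i => Units.mk0 (c i) (hc i)
  let bv : Basis (Fin n) ℝ (Fin n → ℝ) := bw.unitsSMul cu
  have hbv : ∀ i, bv i = c i • w i := by
    intro i
    rw [show bv i = cu i • bw i from Basis.unitsSMul_apply i]
    rw [hbw]
    rfl
  let Λ : (Fin n → ℝ) ≃ₗ[ℝ] (Fin n → ℝ) := (Pi.basisFun ℝ (Fin n)).equiv bv (Equiv.refl _)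
  have hΛe : ∀ i, Λ (ee i) = c i • w i := by
    intro i
    have h0 : (Pi.basisFun ℝ (Fin n)) i = ee i := by
      ext m
      rw [Pi.basisFun_apply]
      rfl
    rw [← h0]
    show ((Pi.basisFun ℝ (Fin n)).equiv bv (Equiv.refl _)) ((Pi.basisFun ℝ (Fin n)) i) = c i • w i
    rw [Basis.equiv_apply, Equiv.refl_apply, hbv]
  have hΛ1 : Λ (1 : Fin n → ℝ) = u' := by
    have hsum := bw.sum_repr u'
    calc Λ (1 : Fin n → ℝ) = Λ (∑ i, ee i) := by rw [← one_eq_sum]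
      _ = ∑ i, Λ (ee i) := map_sum Λ _ _
      _ = ∑ i, c i • w i := by
          refine Finset.sum_congr rfl fun i _ => hΛe i
      _ = u' := by
          rw [← hsum]
          refine Finset.sum_congr rfl fun i _ => by rw [hbw]
  -- map helpers
  have hmapspan : ∀ (g : (Fin n → ℝ) →ₗ[ℝ] (Fin n → ℝ)) (x : Fin n → ℝ),
      Submodule.map g (ℝ ∙ x) = ℝ ∙ (g x) := by
    intro g x
    rw [Submodule.map_span, Set.image_singleton]
  have hmm : ∀ X : Submodule ℝ (Fin n → ℝ),
      Submodule.map (Λ : (Fin n → ℝ) →ₗ[ℝ] (Fin n → ℝ))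
        (Submodule.map (Λ.symm : (Fin n → ℝ) →ₗ[ℝ] (Fin n → ℝ)) X) = X := by
    intro X
    rw [← Submodule.map_comp]
    convert Submodule.map_id X using 2
    ext v
    simp
  have hmm' : ∀ X : Submodule ℝ (Fin n → ℝ),
      Submodule.map (Λ.symm : (Fin n → ℝ) →ₗ[ℝ] (Fin n → ℝ))
        (Submodule.map (Λ : (Fin n → ℝ) →ₗ[ℝ] (Fin n → ℝ)) X) = X := by
    intro X
    rw [← Submodule.map_comp]
    convert Submodule.map_id X using 2
    ext v
    simp
  -- the normalized collineation
  let Φ : PT n ≃ PT n :=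
    { toFun := fun W => ⟨Submodule.map (Λ.symm : (Fin n → ℝ) →ₗ[ℝ] (Fin n → ℝ)) (Ψ W).1,
        by rw [LinearEquiv.finrank_map_eq]; exact (Ψ W).2⟩
      invFun := fun W => Ψ.symm ⟨Submodule.map (Λ : (Fin n → ℝ) →ₗ[ℝ] (Fin n → ℝ)) W.1,
        by rw [LinearEquiv.finrank_map_eq]; exact W.2⟩
      left_inv := fun W => by
        refine (Equiv.symm_apply_eq Ψ).2 ?_
        exact Subtype.ext (hmm _)
      right_inv := fun W => by
        refine Subtype.ext ?_
        show Submodule.map (Λ.symm : (Fin n → ℝ) →ₗ[ℝ] (Fin n → ℝ))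
          (Ψ (Ψ.symm ⟨Submodule.map (Λ : (Fin n → ℝ) →ₗ[ℝ] (Fin n → ℝ)) W.1, _⟩)).1 = W.1
        rw [Ψ.apply_symm_apply]
        exact hmm' W.1 }
  have hΦval : ∀ W : PT n, (Φ W).1
      = Submodule.map (Λ.symm : (Fin n → ℝ) →ₗ[ℝ] (Fin n → ℝ)) (Ψ W).1 := fun W => rfl
  have hΦL : LinesToLines Φ := by
    intro P hP2
    obtain ⟨Q, hQ2, hQ⟩ := hΨ P hP2
    refine ⟨Submodule.map (Λ.symm : (Fin n → ℝ) →ₗ[ℝ] (Fin n → ℝ)) Q,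
      by rw [LinearEquiv.finrank_map_eq]; exact hQ2, ?_⟩
    intro W hWP
    rw [hΦval]
    exact Submodule.map_mono (hQ W hWP)
  have hΦfix : ∀ i : Fin n, f Φ (ℝ ∙ (ee i)) = ℝ ∙ (ee i) := by
    intro i
    rw [f_span_singleton Φ (ee_nonzero i), hΦval, hrep i]
    show Submodule.map (Λ.symm : (Fin n → ℝ) →ₗ[ℝ] (Fin n → ℝ)) (ℝ ∙ (w i)) = ℝ ∙ (ee i)
    rw [hmapspan]
    have h5 : Λ ((c i)⁻¹ • ee i) = w i := by
      rw [map_smul, hΛe, smul_smul, inv_mul_cancel₀ (hc i), one_smul]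
    rw [← h5]
    simp only [LinearEquiv.coe_coe, LinearEquiv.symm_apply_apply]
    exact span_singleton_smul_eq (isUnit_iff_ne_zero.2 (inv_ne_zero (hc i))) _
  have hΦone : f Φ (ℝ ∙ (1 : Fin n → ℝ)) = ℝ ∙ (1 : Fin n → ℝ) := by
    rw [f_span_singleton Φ h1nz, hΦval, hrepu]
    show Submodule.map (Λ.symm : (Fin n → ℝ) →ₗ[ℝ] (Fin n → ℝ)) (ℝ ∙ u') = ℝ ∙ (1 : Fin n → ℝ)
    rw [hmapspan, ← hΛ1]
    simp only [LinearEquiv.coe_coe, LinearEquiv.symm_apply_apply]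
  refine ⟨Λ, fun W => ?_⟩
  have hfixW := psi_fix Φ hΦL hΦfix hΦone hn W
  have h6 : Submodule.map (Λ.symm : (Fin n → ℝ) →ₗ[ℝ] (Fin n → ℝ)) (Ψ W).1 = W.1 := by
    rw [← hΦval, hfixW]
  calc (Ψ W).1
      = Submodule.map (Λ : (Fin n → ℝ) →ₗ[ℝ] (Fin n → ℝ))
        (Submodule.map (Λ.symm : (Fin n → ℝ) →ₗ[ℝ] (Fin n → ℝ)) (Ψ W).1) := (hmm _).symm
    _ = Submodule.map (Λ : (Fin n → ℝ) →ₗ[ℝ] (Fin n → ℝ)) W.1 := by rw [h6]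
end
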